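/- arXiv:2009.12180 — 2 statements merged into one kernel-verified Lean document; each statement's English description precedes it below -/
import Mathlib

section
/- Newton iteration step for the nonlinear ODE system: assume $H_\mathrm{f}(0)$ is invertible in $M_g(K)$. Let $m > 0$, $n = 2m$, and let $X_m \in (tK[[t]])^g$ satisfy $H_\mathrm{f}(X_m) \cdot X_m' \equiv G \pmod{t^m}$. Then $X_n := X_m + H_\mathrm{f}(X_m)^{-1} \int (G - H_\mathrm{f}(X_m) X_m')\,dt$ satisfies $H_\mathrm{f}(X_n) \cdot X_n' \equiv G \pmod{t^{n}}$. -/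
open PowerSeries

/-- Composition `f ∘ x` of formal power series, well defined when `x(0) = 0`. -/
noncomputable def pscomp {K : Type*} [Field K] (f x : PowerSeries K) : PowerSeries K :=
  PowerSeries.mk fun n =>
    PowerSeries.coeff (R := K) n
      (∑ k ∈ Finset.range (n + 1), PowerSeries.C (R := K) (PowerSeries.coeff (R := K) k f) * x ^ k)

/-- Formal derivative of a power series. -/
noncomputable def psderiv {K : Type*} [Field K] (f : PowerSeries K) : PowerSeries K :=
  PowerSeries.mk fun n => ((n + 1 : ℕ) : K) * PowerSeries.coeff (R := K) (n + 1) f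

/-- Formal antiderivative with zero constant term. -/
noncomputable def psint {K : Type*} [Field K] (f : PowerSeries K) : PowerSeries K :=
  PowerSeries.mk fun n => if n = 0 then 0 else ((n : ℕ) : K)⁻¹ * PowerSeries.coeff (R := K) (n - 1) f

/-- The matrix `H_f(X) = (f_{ij}(x_j))_{ij}` obtained by composing the entries of `f`
with the coordinates of `X` (the entry in column `j` is composed with `x_j`, matching
the matrix-vector product `H_f(X) · X'`). -/
noncomputable def Hf {K : Type*} [Field K] {g : ℕ}
    (f : Matrix (Fin g) (Fin g) (PowerSeries K)) (X : Fin g → PowerSeries K) :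
    Matrix (Fin g) (Fin g) (PowerSeries K) :=
  Matrix.of fun i j => pscomp (f i j) (X j)

/-- `H_f(0)`, the matrix of constant coefficients of `f`. -/
noncomputable def Hf0 {K : Type*} [Field K] {g : ℕ}
    (f : Matrix (Fin g) (Fin g) (PowerSeries K)) : Matrix (Fin g) (Fin g) K :=
  Matrix.of fun i j => PowerSeries.constantCoeff (R := K) (f i j)

/-- One step of the Newton iteration:
`X_n = X_m + H_f(X_m)⁻¹ ∫ (G - H_f(X_m) · X_m') dt`. -/
noncomputable def newtonStep {K : Type*} [Field K] {g : ℕ}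
    (f : Matrix (Fin g) (Fin g) (PowerSeries K)) (G Xm : Fin g → PowerSeries K) :
    Fin g → PowerSeries K :=
  fun i => Xm i +
    ((Hf f Xm)⁻¹.mulVec
      (fun j => psint (G j - (Hf f Xm).mulVec (fun i' => psderiv (Xm i')) j))) i


section NewtonAux

variable {K : Type*} [Field K]

lemma psderiv_eq (f : PowerSeries K) : psderiv f = d⁄dX K f := by
  ext n
  simp [psderiv, PowerSeries.coeff_mk, PowerSeries.coeff_derivative, mul_comm]

lemma psderiv_add (a b : PowerSeries K) : psderiv (a + b) = psderiv a + psderiv b := by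
  simp [psderiv_eq, map_add]

lemma psderiv_sub (a b : PowerSeries K) : psderiv (a - b) = psderiv a - psderiv b := by
  simp [psderiv_eq, map_sub]

lemma psderiv_C (c : K) : psderiv (PowerSeries.C (R := K) c) = 0 := by
  simp [psderiv_eq]

lemma psderiv_mul (a b : PowerSeries K) :
    psderiv (a * b) = psderiv a * b + a * psderiv b := by
  simp only [psderiv_eq, Derivation.leibniz, smul_eq_mul]
  ring

lemma psderiv_sum {ι : Type*} (s : Finset ι) (g : ι → PowerSeries K) :
    psderiv (∑ j ∈ s, g j) = ∑ j ∈ s, psderiv (g j) := by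
  simp [psderiv_eq, map_sum]

lemma psderiv_pow_succ (x : PowerSeries K) (n : ℕ) :
    psderiv (x ^ (n + 1)) = ((n + 1 : ℕ) : PowerSeries K) * x ^ n * psderiv x := by
  induction n with
  | zero => simp [psderiv_eq]
  | succ n ih =>
    rw [pow_succ, psderiv_mul, ih]
    push_cast
    ring

lemma psderiv_psint [CharZero K] (f : PowerSeries K) : psderiv (psint f) = f := by
  ext n
  have hne : ((n + 1 : ℕ) : K) ≠ 0 := Nat.cast_ne_zero.2 (Nat.succ_ne_zero n)
  simp only [psderiv, psint, PowerSeries.coeff_mk, Nat.succ_ne_zero, if_false,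
    Nat.add_sub_cancel]
  rw [← mul_assoc, mul_inv_cancel₀ hne, one_mul]

lemma X_pow_dvd_psint {M : ℕ} {f : PowerSeries K} (h : (PowerSeries.X : PowerSeries K) ^ M ∣ f) :
    (PowerSeries.X : PowerSeries K) ^ (M + 1) ∣ psint f := by
  rw [PowerSeries.X_pow_dvd_iff] at h ⊢
  intro n hn
  simp only [psint, PowerSeries.coeff_mk]
  rcases Nat.eq_zero_or_pos n with h0 | h0
  · simp [h0]
  · rw [if_neg h0.ne', h (n - 1) (by omega), mul_zero]

lemma X_pow_dvd_psderiv {M : ℕ} {f : PowerSeries K}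
    (h : (PowerSeries.X : PowerSeries K) ^ (M + 1) ∣ f) :
    (PowerSeries.X : PowerSeries K) ^ M ∣ psderiv f := by
  rw [PowerSeries.X_pow_dvd_iff] at h ⊢
  intro n hn
  simp only [psderiv, PowerSeries.coeff_mk]
  rw [h (n + 1) (by omega), mul_zero]

lemma pscomp_trunc (f x : PowerSeries K) (hx : PowerSeries.constantCoeff (R := K) x = 0) (N : ℕ) :
    (PowerSeries.X : PowerSeries K) ^ N ∣
      pscomp f x - ∑ k ∈ Finset.range N, PowerSeries.C (R := K) (PowerSeries.coeff (R := K) k f) * x ^ k := by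
  have hxd : (PowerSeries.X : PowerSeries K) ∣ x := PowerSeries.X_dvd_iff.2 hx
  rw [PowerSeries.X_pow_dvd_iff]
  intro n hn
  rw [map_sub, pscomp, PowerSeries.coeff_mk, sub_eq_zero]
  have hsplit : Finset.range N = Finset.range (n+1) ∪ Finset.Ico (n+1) N := by
    rw [Finset.range_eq_Ico, Finset.range_eq_Ico]
    exact (Finset.Ico_union_Ico_eq_Ico (by omega) (by omega)).symm
  rw [hsplit, Finset.sum_union (by
    rw [Finset.range_eq_Ico]; exact Finset.Ico_disjoint_Ico_consecutive 0 (n+1) N)]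
  rw [map_add, left_eq_add, map_sum]
  apply Finset.sum_eq_zero
  intro k hk
  rw [Finset.mem_Ico] at hk
  rw [PowerSeries.coeff_C_mul]
  have hd : (PowerSeries.X : PowerSeries K) ^ k ∣ x ^ k := pow_dvd_pow_of_dvd hxd k
  rw [PowerSeries.X_pow_dvd_iff] at hd
  rw [hd n (by omega), mul_zero]

lemma ps_eq_of_forall_dvd {a b : PowerSeries K}
    (h : ∀ N, (PowerSeries.X : PowerSeries K) ^ N ∣ a - b) : a = b := by
  ext n
  have h1 := h (n + 1)
  rw [PowerSeries.X_pow_dvd_iff] at h1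
  have h2 := h1 n (by omega)
  rwa [map_sub, sub_eq_zero] at h2

lemma coeff_psderiv (f : PowerSeries K) (n : ℕ) :
    PowerSeries.coeff (R := K) n (psderiv f) = ((n + 1 : ℕ) : K) * PowerSeries.coeff (R := K) (n + 1) f :=
  PowerSeries.coeff_mk _ _

lemma C_coeff_psderiv (f : PowerSeries K) (j : ℕ) :
    PowerSeries.C (R := K) (PowerSeries.coeff (R := K) j (psderiv f))
      = ((j + 1 : ℕ) : PowerSeries K) * PowerSeries.C (R := K) (PowerSeries.coeff (R := K) (j+1) f) := by
  rw [coeff_psderiv, map_mul, map_natCast]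

lemma pscomp_chain (f x : PowerSeries K) (hx : PowerSeries.constantCoeff (R := K) x = 0) :
    psderiv (pscomp f x) = pscomp (psderiv f) x * psderiv x := by
  apply ps_eq_of_forall_dvd
  intro N
  set P : PowerSeries K := ∑ k ∈ Finset.range (N+1),
    PowerSeries.C (R := K) (PowerSeries.coeff (R := K) k f) * x ^ k with hP
  set Q : PowerSeries K := ∑ j ∈ Finset.range N,
    PowerSeries.C (R := K) (PowerSeries.coeff (R := K) j (psderiv f)) * x ^ j with hQ
  have h1 : (PowerSeries.X : PowerSeries K) ^ (N+1) ∣ pscomp f x - P := pscomp_trunc f x hx (N+1)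
  have h2 : (PowerSeries.X : PowerSeries K) ^ N ∣ psderiv (pscomp f x) - psderiv P := by
    have := X_pow_dvd_psderiv (M := N) h1
    rwa [psderiv_sub] at this
  have h4 : (PowerSeries.X : PowerSeries K) ^ N ∣
      pscomp (psderiv f) x * psderiv x - Q * psderiv x := by
    rw [← sub_mul]
    exact (pscomp_trunc (psderiv f) x hx N).mul_right _
  have h3 : psderiv P = Q * psderiv x := by
    rw [hP, psderiv_sum, Finset.sum_range_succ']
    have h0 : psderiv (PowerSeries.C (R := K) (PowerSeries.coeff (R := K) 0 f) * x ^ 0) = 0 := by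
      rw [pow_zero, mul_one, psderiv_C]
    rw [h0, add_zero, hQ, Finset.sum_mul]
    apply Finset.sum_congr rfl
    intro j _
    rw [psderiv_mul, psderiv_C, zero_mul, zero_add, psderiv_pow_succ, C_coeff_psderiv]
    ring
  have heq : psderiv (pscomp f x) - pscomp (psderiv f) x * psderiv x
      = (psderiv (pscomp f x) - psderiv P)
        - (pscomp (psderiv f) x * psderiv x - Q * psderiv x) := by rw [← h3]; ring
  rw [heq]
  exact dvd_sub h2 h4

lemma binom_aux (x δ : PowerSeries K) (n : ℕ) :
    δ * δ ∣ (x + δ) ^ (n + 1) - x ^ (n + 1) - ((n + 1 : ℕ) : PowerSeries K) * x ^ n * δ := by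
  induction n with
  | zero => exact ⟨0, by push_cast; ring⟩
  | succ n ih =>
    obtain ⟨u, hu⟩ := ih
    refine ⟨u * (x + δ) + ((n + 1 : ℕ) : PowerSeries K) * x ^ n, ?_⟩
    have hx1 : (x + δ) ^ (n + 2) = ((x + δ) ^ (n + 1)) * (x + δ) := by ring
    have hu' : (x + δ) ^ (n + 1)
        = x ^ (n + 1) + ((n + 1 : ℕ) : PowerSeries K) * x ^ n * δ + δ * δ * u := by
      rw [← hu]; ring
    rw [hx1, hu']
    push_cast
    ring

lemma pscomp_taylor (f x δ : PowerSeries K) (hx : PowerSeries.constantCoeff (R := K) x = 0)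
    (hδ0 : PowerSeries.constantCoeff (R := K) δ = 0) (M : ℕ)
    (hδ : (PowerSeries.X : PowerSeries K) ^ M ∣ δ) :
    (PowerSeries.X : PowerSeries K) ^ (2 * M) ∣
      pscomp f (x + δ) - pscomp f x - pscomp (psderiv f) x * δ := by
  set L := 2 * M with hL
  have hxδ : PowerSeries.constantCoeff (R := K) (x + δ) = 0 := by rw [map_add, hx, hδ0, add_zero]
  set S1 : PowerSeries K := ∑ k ∈ Finset.range (L+1),
    PowerSeries.C (R := K) (PowerSeries.coeff (R := K) k f) * (x + δ) ^ k with hS1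
  set S2 : PowerSeries K := ∑ k ∈ Finset.range (L+1),
    PowerSeries.C (R := K) (PowerSeries.coeff (R := K) k f) * x ^ k with hS2
  set S3 : PowerSeries K := ∑ j ∈ Finset.range L,
    PowerSeries.C (R := K) (PowerSeries.coeff (R := K) j (psderiv f)) * x ^ j with hS3
  have h1 : (PowerSeries.X : PowerSeries K) ^ L ∣ pscomp f (x + δ) - S1 :=
    (pow_dvd_pow _ (by omega)).trans (pscomp_trunc f (x + δ) hxδ (L+1))
  have h2 : (PowerSeries.X : PowerSeries K) ^ L ∣ pscomp f x - S2 :=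
    (pow_dvd_pow _ (by omega)).trans (pscomp_trunc f x hx (L+1))
  have h3 : (PowerSeries.X : PowerSeries K) ^ L ∣
      pscomp (psderiv f) x * δ - S3 * δ := by
    rw [← sub_mul]
    exact (pscomp_trunc (psderiv f) x hx L).mul_right _
  have hδ2 : (PowerSeries.X : PowerSeries K) ^ L ∣ δ * δ := by
    rw [hL, two_mul, pow_add]
    exact mul_dvd_mul hδ hδ
  have h4 : (PowerSeries.X : PowerSeries K) ^ L ∣ S1 - S2 - S3 * δ := by
    have hsum : S1 - S2 - S3 * δ = ∑ j ∈ Finset.range L,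
        (PowerSeries.C (R := K) (PowerSeries.coeff (R := K) (j+1) f)
            * ((x + δ) ^ (j+1) - x ^ (j+1))
          - PowerSeries.C (R := K) (PowerSeries.coeff (R := K) j (psderiv f)) * x ^ j * δ) := by
      rw [hS1, hS2, hS3, ← Finset.sum_sub_distrib, Finset.sum_mul]
      rw [Finset.sum_range_succ' (fun k => PowerSeries.C (R := K) (PowerSeries.coeff (R := K) k f) * (x + δ) ^ k
            - PowerSeries.C (R := K) (PowerSeries.coeff (R := K) k f) * x ^ k) L]
      simp only [pow_zero, mul_one, sub_self, add_zero]
      rw [← Finset.sum_sub_distrib]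
      apply Finset.sum_congr rfl
      intro j _
      ring
    rw [hsum]
    apply Finset.dvd_sum
    intro j _
    obtain ⟨u, hu⟩ := binom_aux x δ j
    have hu' : (x + δ) ^ (j + 1) - x ^ (j + 1)
        = ((j + 1 : ℕ) : PowerSeries K) * x ^ j * δ + δ * δ * u := by rw [← hu]; ring
    rw [hu', C_coeff_psderiv]
    exact hδ2.trans ⟨PowerSeries.C (R := K) (PowerSeries.coeff (R := K) (j+1) f) * u, by ring⟩
  have heq : pscomp f (x + δ) - pscomp f x - pscomp (psderiv f) x * δ
      = (pscomp f (x + δ) - S1) - (pscomp f x - S2)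
        - (pscomp (psderiv f) x * δ - S3 * δ) + (S1 - S2 - S3 * δ) := by ring
  rw [heq]
  exact dvd_add (dvd_sub (dvd_sub h1 h2) h3) h4

lemma constantCoeff_pscomp (f x : PowerSeries K) :
    PowerSeries.constantCoeff (R := K) (pscomp f x) = PowerSeries.constantCoeff (R := K) f := by
  rw [← PowerSeries.coeff_zero_eq_constantCoeff_apply,
    ← PowerSeries.coeff_zero_eq_constantCoeff_apply]
  simp [pscomp]

lemma newton_key_dvd [CharZero K] {g : ℕ}
    (f : Matrix (Fin g) (Fin g) (PowerSeries K)) (hH0 : IsUnit (Hf0 f))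
    (G : Fin g → PowerSeries K) (m : ℕ)
    (Xm : Fin g → PowerSeries K) (hXm0 : ∀ i, PowerSeries.constantCoeff (R := K) (Xm i) = 0)
    (hXm : ∀ i, ∀ k < m,
      PowerSeries.coeff (R := K) k ((Hf f Xm).mulVec (fun i' => psderiv (Xm i')) i) =
        PowerSeries.coeff (R := K) k (G i)) (i : Fin g) :
    (PowerSeries.X : PowerSeries K) ^ (2 * m) ∣
      (Hf f (newtonStep f G Xm)).mulVec (fun i' => psderiv (newtonStep f G Xm i')) i - G i := by
  set H := Hf f Xm with hH
  set Xd : Fin g → PowerSeries K := fun j => psderiv (Xm j) with hXdDef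
  set Rv : Fin g → PowerSeries K := fun j => G j - H.mulVec Xd j with hRv
  set E : Fin g → PowerSeries K := fun j => psint (Rv j) with hEdef
  set Δ : Fin g → PowerSeries K := fun j => H⁻¹.mulVec E j with hΔdef
  have hXn : ∀ j, newtonStep f G Xm j = Xm j + Δ j := fun j => rfl
  -- invertibility
  have hmap : H.map (PowerSeries.constantCoeff (R := K)) = Hf0 f := by
    ext a b
    simp [hH, Hf, Hf0, Matrix.map_apply, constantCoeff_pscomp]
  have hdet : IsUnit H.det := by
    have hcc : (PowerSeries.constantCoeff (R := K)) H.det = (Hf0 f).det := by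
      rw [RingHom.map_det, RingHom.mapMatrix_apply, hmap]
    rw [PowerSeries.isUnit_iff_constantCoeff, hcc]
    exact (Matrix.isUnit_iff_isUnit_det _).1 hH0
  have hinv : H * H⁻¹ = 1 := Matrix.mul_nonsing_inv H hdet
  have hHΔ : H.mulVec Δ = E := by
    show H.mulVec (H⁻¹.mulVec E) = E
    rw [Matrix.mulVec_mulVec, hinv, Matrix.one_mulVec]
  have hR : ∀ j, (PowerSeries.X : PowerSeries K) ^ m ∣ Rv j := by
    intro j
    rw [PowerSeries.X_pow_dvd_iff]
    intro n hn
    rw [hRv]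
    simp only [map_sub, sub_eq_zero]
    exact (hXm j n hn).symm
  have hEd : ∀ j, (PowerSeries.X : PowerSeries K) ^ (m+1) ∣ E j := fun j => X_pow_dvd_psint (hR j)
  have hΔd : ∀ j, (PowerSeries.X : PowerSeries K) ^ (m+1) ∣ Δ j := by
    intro j
    show _ ∣ H⁻¹.mulVec E j
    simp only [Matrix.mulVec, dotProduct]
    exact Finset.dvd_sum fun k _ => Dvd.dvd.mul_left (hEd k) _
  have hΔ0 : ∀ j, PowerSeries.constantCoeff (R := K) (Δ j) = 0 := by
    intro j
    exact PowerSeries.X_dvd_iff.1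
      ((dvd_pow_self (PowerSeries.X : PowerSeries K) (Nat.succ_ne_zero m)).trans (hΔd j))
  have hΔd' : ∀ j, (PowerSeries.X : PowerSeries K) ^ m ∣ psderiv (Δ j) :=
    fun j => X_pow_dvd_psderiv (hΔd j)
  have hEderiv : ∀ j, psderiv (E j) = Rv j := fun j => psderiv_psint _
  have hchain : ∀ j, psderiv (H i j) = pscomp (psderiv (f i j)) (Xm j) * Xd j := by
    intro j
    show psderiv (pscomp (f i j) (Xm j)) = _
    exact pscomp_chain _ _ (hXm0 j)
  have hkey : ∑ j, H i j * psderiv (Δ j)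
      + ∑ j, pscomp (psderiv (f i j)) (Xm j) * Δ j * Xd j = Rv i := by
    have hmvi : H.mulVec Δ i = ∑ j, H i j * Δ j := by
      simp [Matrix.mulVec, dotProduct]
    have h1 : psderiv (∑ j, H i j * Δ j) = Rv i := by
      rw [← hmvi, hHΔ, hEderiv]
    rw [psderiv_sum] at h1
    have h2 : ∑ j, psderiv (H i j * Δ j)
        = ∑ j, (H i j * psderiv (Δ j) + pscomp (psderiv (f i j)) (Xm j) * Δ j * Xd j) := by
      apply Finset.sum_congr rfl
      intro j _
      rw [psderiv_mul, hchain j]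
      ring
    rw [h2, Finset.sum_add_distrib] at h1
    exact h1
  have hT : ∀ j, (PowerSeries.X : PowerSeries K) ^ (2*m) ∣
      pscomp (f i j) (Xm j + Δ j) - H i j - pscomp (psderiv (f i j)) (Xm j) * Δ j := by
    intro j
    exact (pow_dvd_pow _ (by omega)).trans
      (pscomp_taylor (f i j) (Xm j) (Δ j) (hXm0 j) (hΔ0 j) (m+1) (hΔd j))
  have hXnd : ∀ j, psderiv (newtonStep f G Xm j) = Xd j + psderiv (Δ j) := by
    intro j
    rw [hXn j, psderiv_add]
  have hmv : (Hf f (newtonStep f G Xm)).mulVec (fun i' => psderiv (newtonStep f G Xm i')) i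
      = ∑ j, pscomp (f i j) (Xm j + Δ j) * (Xd j + psderiv (Δ j)) := by
    simp only [Matrix.mulVec, dotProduct, Hf, Matrix.of_apply]
    apply Finset.sum_congr rfl
    intro j _
    simp only [hXn j, psderiv_add, hXdDef]
  have expand : (Hf f (newtonStep f G Xm)).mulVec (fun i' => psderiv (newtonStep f G Xm i')) i
        - G i
      = ∑ j, (pscomp (f i j) (Xm j + Δ j) - H i j - pscomp (psderiv (f i j)) (Xm j) * Δ j)
            * (Xd j + psderiv (Δ j))
        + ∑ j, pscomp (psderiv (f i j)) (Xm j) * Δ j * psderiv (Δ j)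
        + (∑ j, H i j * psderiv (Δ j) + ∑ j, pscomp (psderiv (f i j)) (Xm j) * Δ j * Xd j)
        + (∑ j, H i j * Xd j - G i) := by
    rw [hmv]
    have hsummand : ∀ j : Fin g, pscomp (f i j) (Xm j + Δ j) * (Xd j + psderiv (Δ j))
        = (pscomp (f i j) (Xm j + Δ j) - H i j - pscomp (psderiv (f i j)) (Xm j) * Δ j)
            * (Xd j + psderiv (Δ j))
          + pscomp (psderiv (f i j)) (Xm j) * Δ j * psderiv (Δ j)
          + (H i j * psderiv (Δ j) + pscomp (psderiv (f i j)) (Xm j) * Δ j * Xd j)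
          + H i j * Xd j := by
      intro j
      ring
    rw [Finset.sum_congr rfl fun j _ => hsummand j]
    rw [Finset.sum_add_distrib, Finset.sum_add_distrib, Finset.sum_add_distrib,
      Finset.sum_add_distrib]
    ring
  have hRG : ∑ j, H i j * Xd j - G i = -(Rv i) := by
    have hmvi : H.mulVec Xd i = ∑ j, H i j * Xd j := by
      simp [Matrix.mulVec, dotProduct]
    rw [hRv]
    simp only
    rw [← hmvi]
    ring
  rw [expand, hkey, hRG]
  have hfinal : ∑ j, (pscomp (f i j) (Xm j + Δ j) - H i j
          - pscomp (psderiv (f i j)) (Xm j) * Δ j) * (Xd j + psderiv (Δ j))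
        + ∑ j, pscomp (psderiv (f i j)) (Xm j) * Δ j * psderiv (Δ j)
        + Rv i + -(Rv i)
      = ∑ j, (pscomp (f i j) (Xm j + Δ j) - H i j
          - pscomp (psderiv (f i j)) (Xm j) * Δ j) * (Xd j + psderiv (Δ j))
        + ∑ j, pscomp (psderiv (f i j)) (Xm j) * Δ j * psderiv (Δ j) := by
    ring
  rw [hfinal]
  apply dvd_add
  · exact Finset.dvd_sum fun j _ => (hT j).mul_right _
  · apply Finset.dvd_sum
    intro j _
    have hdd : (PowerSeries.X : PowerSeries K) ^ (2*m) ∣ Δ j * psderiv (Δ j) := by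
      rw [two_mul, pow_add]
      exact mul_dvd_mul ((pow_dvd_pow _ (by omega)).trans (hΔd j)) (hΔd' j)
    rw [mul_assoc]
    exact hdd.mul_left _

end NewtonAux

/-- Newton iteration step for the nonlinear ODE system: if `X_m` solves
`H_f(X) · X' = G` modulo `t^m`, then the Newton update solves it modulo `t^{2m}`. -/
theorem newton_step_correct {K : Type*} [Field K] [CharZero K] {g : ℕ}
    (f : Matrix (Fin g) (Fin g) (PowerSeries K)) (hH0 : IsUnit (Hf0 f))
    (G : Fin g → PowerSeries K) (m : ℕ) (hm : 0 < m)
    (Xm : Fin g → PowerSeries K) (hXm0 : ∀ i, PowerSeries.constantCoeff (R := K) (Xm i) = 0)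
    (hXm : ∀ i, ∀ k < m,
      PowerSeries.coeff (R := K) k ((Hf f Xm).mulVec (fun i' => psderiv (Xm i')) i) =
        PowerSeries.coeff (R := K) k (G i)) :
    ∀ i, ∀ k < 2 * m,
      PowerSeries.coeff (R := K) k
          ((Hf f (newtonStep f G Xm)).mulVec
            (fun i' => psderiv (newtonStep f G Xm i')) i) =
        PowerSeries.coeff (R := K) k (G i) := by
  intro i k hk
  have hdvd := newton_key_dvd f hH0 G m Xm hXm0 hXm i
  rw [PowerSeries.X_pow_dvd_iff] at hdvd
  have h := hdvd k hk
  rwa [map_sub, sub_eq_zero] at h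
end

section
/- Precision of the fixed-point Newton solver: let $K$ be a finite extension of $\mathbb{Q}_p$ with $p \geq 5$, and suppose two inputs $G, \tilde{G} \in (\mathcal{O}_K[[t]]/(t^n))^g$ satisfy $\|G - \tilde{G}\| \leq p^{-M}$ in Gauss norm with $M = N + \lfloor \log_p n \rfloor$ and $N \geq 1$. If the solution $X(G)$ of $H_\mathrm{f}(X)X' = G$ has coefficients in $\mathcal{O}_K$, then $\|X_n(G) - X_n(\tilde{G})\| \leq p^{-N}$, where $X_n$ denotes the truncated-solution map mod $t^{n+1}$. -/
open PowerSeries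

/-- Gauss norm of the truncation of a power series modulo `t^n`:
the maximum of the norms of the coefficients of degree `< n`. -/
noncomputable def gnorm {K : Type*} [NormedField K] (n : ℕ) (f : PowerSeries K) : NNReal :=
  (Finset.range n).sup fun k => ‖PowerSeries.coeff (R := K) k f‖₊

/-- Sup norm of a vector of truncated power series. -/
noncomputable def gnormVec {K : Type*} [NormedField K] {g : ℕ} (n : ℕ)
    (x : Fin g → PowerSeries K) : NNReal :=
  Finset.univ.sup fun i => gnorm n (x i)

/-- Norm of a matrix of truncated power series (nonarchimedean setting:
the row sums may be replaced by maxima). -/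
noncomputable def gnormMat {K : Type*} [NormedField K] {g : ℕ} (n : ℕ)
    (A : Matrix (Fin g) (Fin g) (PowerSeries K)) : NNReal :=
  Finset.univ.sup fun p : Fin g × Fin g => gnorm n (A p.1 p.2)

namespace NewtonAux

variable {K : Type*} [Field K]

lemma coeff_psderiv (f : PowerSeries K) (n : ℕ) :
    coeff (R := K) n (psderiv f) = ((n + 1 : ℕ) : K) * coeff (R := K) (n + 1) f := by
  simp [psderiv]

lemma psderiv_eq (f : PowerSeries K) : psderiv f = derivativeFun f := by
  ext n
  rw [coeff_psderiv, show derivativeFun f = derivative K f from rfl, coeff_derivativeFun, mul_comm]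
  push_cast
  ring

lemma psderiv_add (f g : PowerSeries K) : psderiv (f + g) = psderiv f + psderiv g := by
  simp [psderiv_eq, derivativeFun_add]

lemma psderiv_sub (f g : PowerSeries K) : psderiv (f - g) = psderiv f - psderiv g := by
  ext n
  simp [coeff_psderiv, mul_sub]

lemma psderiv_mul (f g : PowerSeries K) :
    psderiv (f * g) = f * psderiv g + g * psderiv f := by
  simp [psderiv_eq, derivativeFun_mul, smul_eq_mul]

lemma psderiv_C_mul (a : K) (f : PowerSeries K) :
    psderiv (C (R := K) a * f) = C (R := K) a * psderiv f := by
  ext n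
  simp [coeff_psderiv, coeff_C_mul]
  ring

lemma psderiv_sum {ι : Type*} (s : Finset ι) (F : ι → PowerSeries K) :
    psderiv (∑ r ∈ s, F r) = ∑ r ∈ s, psderiv (F r) := by
  classical
  induction s using Finset.induction with
  | empty => ext n; simp [coeff_psderiv]
  | insert _ _ hx ih => rw [Finset.sum_insert hx, psderiv_add, ih, Finset.sum_insert hx]

lemma psderiv_pow (x : PowerSeries K) (r : ℕ) :
    psderiv (x ^ (r + 1)) = ((r + 1 : ℕ) : PowerSeries K) * (x ^ r * psderiv x) := by
  induction r with
  | zero => simp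
  | succ r ih =>
      have : x ^ (r + 2) = x ^ (r + 1) * x := by ring
      rw [this, psderiv_mul, ih]
      push_cast
      ring

/-- vanishing of low coefficients of powers of series without constant term -/
lemma coeff_pow_eq_zero {x : PowerSeries K} (hx : constantCoeff (R := K) x = 0) {a r : ℕ}
    (h : a < r) : coeff (R := K) a (x ^ r) = 0 := by
  have hdvd : (X : PowerSeries K) ^ r ∣ x ^ r := pow_dvd_pow_of_dvd (X_dvd_iff.2 hx) r
  exact (X_pow_dvd_iff.1 hdvd) a h

lemma coeff_mul_congr_left {u₁ u₂ w : PowerSeries K} {d : ℕ}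
    (h : ∀ a ≤ d, coeff (R := K) a u₁ = coeff (R := K) a u₂) :
    coeff (R := K) d (u₁ * w) = coeff (R := K) d (u₂ * w) := by
  rw [coeff_mul, coeff_mul]
  refine Finset.sum_congr rfl fun ij hij => ?_
  rw [Finset.HasAntidiagonal.mem_antidiagonal] at hij
  rw [h ij.1 (by omega)]

lemma coeff_mul_eq_zero {u v : PowerSeries K} {k : ℕ}
    (hu : ∀ m < k, coeff (R := K) m u = 0) (hv : constantCoeff (R := K) v = 0) :
    coeff (R := K) k (u * v) = 0 := by
  rw [coeff_mul]
  refine Finset.sum_eq_zero fun ij hij => ?_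
  rw [Finset.HasAntidiagonal.mem_antidiagonal] at hij
  rcases lt_or_ge ij.1 k with h | h
  · rw [hu ij.1 h, zero_mul]
  · have h1 : ij.1 = k := by omega
    have h2 : ij.2 = 0 := by omega
    rw [h2, coeff_zero_eq_constantCoeff, hv, mul_zero]

end NewtonAux

namespace NewtonAux
variable {K : Type*} [Field K]

lemma coeff_pscomp (f x : PowerSeries K) (d : ℕ) :
    coeff (R := K) d (pscomp f x) = ∑ r ∈ Finset.range (d + 1), coeff (R := K) r f * coeff (R := K) d (x ^ r) := by
  simp [pscomp, coeff_C_mul]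

lemma coeff_pscomp_eq_sum {f x : PowerSeries K} (hx : constantCoeff (R := K) x = 0) {a n : ℕ}
    (h : a ≤ n) :
    coeff (R := K) a (pscomp f x)
      = coeff (R := K) a (∑ r ∈ Finset.range (n + 1), C (R := K) (coeff (R := K) r f) * x ^ r) := by
  rw [coeff_pscomp, map_sum]
  simp only [coeff_C_mul]
  refine Finset.sum_subset (Finset.range_subset_range.2 (by omega)) fun r _ hr => ?_
  rw [Finset.mem_range, not_lt] at hr
  rw [coeff_pow_eq_zero hx (by omega), mul_zero]

/-- Main identity: the derivative of the explicit "antiderivative sum" has the same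
coefficients (below `n`) as `pscomp f x * psderiv x`. -/
lemma coeff_psderiv_antideriv {f x : PowerSeries K} (hx : constantCoeff (R := K) x = 0)
    (hchar : ∀ m : ℕ, 0 < m → ((m : ℕ) : K) ≠ 0) {d n : ℕ} (hd : d < n) :
    coeff (R := K) d (psderiv (∑ r ∈ Finset.range (n + 1),
        C (R := K) (coeff (R := K) r f * ((r + 1 : ℕ) : K)⁻¹) * x ^ (r + 1)))
      = coeff (R := K) d (pscomp f x * psderiv x) := by
  rw [psderiv_sum]
  have hterm : ∀ r : ℕ,
      psderiv (C (R := K) (coeff (R := K) r f * ((r + 1 : ℕ) : K)⁻¹) * x ^ (r + 1))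
        = C (R := K) (coeff (R := K) r f) * x ^ r * psderiv x := by
    intro r
    rw [psderiv_C_mul, psderiv_pow]
    have hcast : ((r + 1 : ℕ) : PowerSeries K) = C (R := K) ((r + 1 : ℕ) : K) := by
      simp [map_natCast]
    rw [hcast, ← mul_assoc, ← map_mul, mul_assoc (coeff (R := K) r f), inv_mul_cancel₀ (hchar (r+1) (by omega)), mul_one, mul_assoc]
  rw [Finset.sum_congr rfl fun r _ => hterm r]
  rw [← Finset.sum_mul]
  rw [Finset.sum_congr rfl fun r _ => rfl]
  refine (coeff_mul_congr_left fun a ha => ?_).symm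
  exact coeff_pscomp_eq_sum hx (le_trans ha (le_of_lt hd))

end NewtonAux

namespace NewtonAux
variable {K : Type*} [NormedField K] [IsUltrametricDist K]

lemma nnnorm_coeff_mul_le {u v : PowerSeries K} {c d : NNReal}
    (hu : ∀ m, ‖coeff (R := K) m u‖₊ ≤ c) (hv : ∀ m, ‖coeff (R := K) m v‖₊ ≤ d) (m : ℕ) :
    ‖coeff (R := K) m (u * v)‖₊ ≤ c * d := by
  rw [coeff_mul]
  refine IsUltrametricDist.nnnorm_sum_le_of_forall_le fun ij _ => ?_
  rw [nnnorm_mul]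
  exact mul_le_mul' (hu _) (hv _)

lemma nnnorm_coeff_pow_le {u : PowerSeries K} {c : NNReal}
    (hu : ∀ m, ‖coeff (R := K) m u‖₊ ≤ c) (s : ℕ) (m : ℕ) :
    ‖coeff (R := K) m (u ^ s)‖₊ ≤ c ^ s := by
  induction s generalizing m with
  | zero =>
      simp only [pow_zero, coeff_one]
      split <;> simp
  | succ s ih =>
      rw [pow_succ, pow_succ]
      exact nnnorm_coeff_mul_le ih hu m

/-- Truncation bound: `‖coeff k (x^a * h^s)‖ ≤ δ^s` when `h` has small coefficients
below degree `k` and `a + s ≥ 2`, `s ≥ 1`. -/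
lemma coeff_pow_mul_pow_bound {x h : PowerSeries K} (hx0 : constantCoeff (R := K) x = 0)
    (hh0 : constantCoeff (R := K) h = 0) (hxint : ∀ m, ‖coeff (R := K) m x‖₊ ≤ 1)
    {k : ℕ} (hk : 1 ≤ k) {δ : NNReal} (hIH : ∀ m < k, ‖coeff (R := K) m h‖₊ ≤ δ)
    {a s : ℕ} (hs : 1 ≤ s) (has : 2 ≤ a + s) :
    ‖coeff (R := K) k (x ^ a * h ^ s)‖₊ ≤ δ ^ s := by
  set t : PowerSeries K := ((trunc k h : Polynomial K) : PowerSeries K) with ht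
  have hcoe : ∀ m, coeff (R := K) m t = if m < k then coeff (R := K) m h else 0 := by
    intro m
    rw [ht, Polynomial.coeff_coe, coeff_trunc]
  have ht0 : constantCoeff (R := K) t = 0 := by
    rw [← coeff_zero_eq_constantCoeff, hcoe, if_pos (by omega), coeff_zero_eq_constantCoeff, hh0]
  have htb : ∀ m, ‖coeff (R := K) m t‖₊ ≤ δ := by
    intro m
    rw [hcoe]
    split
    · exact hIH m (by assumption)
    · simp
  have hdiff : ∀ m < k, coeff (R := K) m (h - t) = 0 := by
    intro m hm
    rw [map_sub, hcoe, if_pos hm, sub_self]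
  have step1 : coeff (R := K) k (x ^ a * h ^ s) = coeff (R := K) k (x ^ a * t ^ s) := by
    have hgeom : h ^ s - t ^ s = (∑ i ∈ Finset.range s, h ^ i * t ^ (s - 1 - i)) * (h - t) :=
      (geom_sum₂_mul h t s).symm
    have hker : coeff (R := K) k (x ^ a * h ^ s - x ^ a * t ^ s) = 0 := by
      have : x ^ a * h ^ s - x ^ a * t ^ s
          = (h - t) * (x ^ a * ∑ i ∈ Finset.range s, h ^ i * t ^ (s - 1 - i)) := by
        rw [← mul_sub, hgeom]; ring
      rw [this]
      refine coeff_mul_eq_zero hdiff ?_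
      rcases Nat.lt_or_ge a 1 with ha | ha
      · -- a = 0, so s ≥ 2
        have ha0 : a = 0 := by omega
        have hs2 : 2 ≤ s := by omega
        rw [ha0, pow_zero, one_mul, map_sum]
        refine Finset.sum_eq_zero fun i _ => ?_
        rcases Nat.lt_or_ge i 1 with hi | hi
        · have hi0 : i = 0 := by omega
          rw [hi0, pow_zero, one_mul, map_pow, ht0, zero_pow (by omega)]
        · rw [map_mul, map_pow, hh0, zero_pow (by omega), zero_mul]
      · rw [map_mul, map_pow, hx0, zero_pow (by omega), zero_mul]
    rw [map_sub, sub_eq_zero] at hker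
    exact hker
  rw [step1]
  calc ‖coeff (R := K) k (x ^ a * t ^ s)‖₊ ≤ 1 ^ a * δ ^ s :=
        nnnorm_coeff_mul_le (nnnorm_coeff_pow_le hxint a) (nnnorm_coeff_pow_le htb s) k
    _ = δ ^ s := by rw [one_pow, one_mul]

end NewtonAux

namespace NewtonAux

lemma zpow_mul_zpow_le {P : NNReal} (hP : 1 ≤ P) {e1 e2 e3 : ℤ} (h : e1 + e2 ≤ e3) :
    P ^ e1 * P ^ e2 ≤ P ^ e3 := by
  rw [← zpow_add₀ (by positivity : P ≠ 0)]
  exact zpow_le_zpow_right₀ hP h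

lemma padicValNat_le_pred {p s : ℕ} (hs : 1 ≤ s) : padicValNat p s ≤ s - 1 := by
  have h1 := padicValNat_le_nat_log (p := p) s
  have h2 := Nat.log_lt_self p (x := s) (by omega)
  omega

end NewtonAux

/-- Precision of the fixed-point Newton solver over a finite extension `K` of
`ℚ_p`, `p ≥ 5` (the normalized valuation on `K` is encoded by the hypothesis
`hnat`): if `‖G - G̃‖ ≤ p^{-M}` with `M = N + ⌊log_p n⌋` and the solution `X` for
`G` has integral coefficients, then the truncated solutions agree up to `p^{-N}`:
`‖X_n(G) - X_n(G̃)‖ ≤ p^{-N}`. -/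
theorem newton_solver_precision {p : ℕ} [Fact p.Prime] (hp : 5 ≤ p)
    {K : Type*} [NormedField K] [IsUltrametricDist K]
    (hnat : ∀ m : ℕ, 0 < m → ‖(m : K)‖₊ = (p : NNReal) ^ (-(padicValNat p m : ℤ)))
    {g : ℕ} (n N : ℕ) (hn : 1 ≤ n) (hN : 1 ≤ N)
    (f : Matrix (Fin g) (Fin g) (PowerSeries K))
    (hf : ∀ i j k, ‖PowerSeries.coeff (R := K) k (f i j)‖₊ ≤ 1)
    (B0 : Matrix (Fin g) (Fin g) K) (hB0l : Hf0 f * B0 = 1) (hB0r : B0 * Hf0 f = 1)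
    (hB0int : ∀ i j, ‖B0 i j‖₊ ≤ 1)
    (G G' : Fin g → PowerSeries K)
    (hG : ∀ i k, ‖PowerSeries.coeff (R := K) k (G i)‖₊ ≤ 1)
    (hG' : ∀ i k, ‖PowerSeries.coeff (R := K) k (G' i)‖₊ ≤ 1)
    (hclose : ∀ i, ∀ k < n,
      ‖PowerSeries.coeff (R := K) k (G i - G' i)‖₊ ≤ (p : NNReal) ^ (-((N + Nat.log p n : ℕ)) : ℤ))
    (X X' : Fin g → PowerSeries K)
    (hX0 : ∀ i, PowerSeries.constantCoeff (R := K) (X i) = 0)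
    (hX0' : ∀ i, PowerSeries.constantCoeff (R := K) (X' i) = 0)
    (hXsol : (Hf f X).mulVec (fun i => psderiv (X i)) = G)
    (hXsol' : (Hf f X').mulVec (fun i => psderiv (X' i)) = G')
    (hXint : ∀ i k, ‖PowerSeries.coeff (R := K) k (X i)‖₊ ≤ 1) :
    ∀ i, ∀ k ≤ n, ‖PowerSeries.coeff (R := K) k (X i - X' i)‖₊ ≤ (p : NNReal) ^ (-(N : ℤ)) := by
  classical
  have hp2 : 2 ≤ p := by omega
  have hp1 : (1 : NNReal) ≤ (p : NNReal) := by exact_mod_cast (by omega : 1 ≤ p)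
  have hp0 : (0 : NNReal) < (p : NNReal) := lt_of_lt_of_le one_pos hp1
  have hchar : ∀ m : ℕ, 0 < m → ((m : ℕ) : K) ≠ 0 := by
    intro m hm h0
    have h1 := hnat m hm
    rw [h0, nnnorm_zero] at h1
    exact absurd h1.symm (ne_of_gt (zpow_pos hp0 _))
  have hnorm_nat : ∀ m : ℕ, ‖(m : K)‖₊ ≤ 1 := by
    intro m
    rcases Nat.eq_zero_or_pos m with rfl | hm
    · simp
    · rw [hnat m hm]; exact zpow_le_one_of_nonpos₀ hp1 (by omega)
  have hinv : ∀ m : ℕ, 0 < m → ‖((m : K))⁻¹‖₊ = (p : NNReal) ^ (padicValNat p m : ℤ) := by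
    intro m hm
    rw [nnnorm_inv, hnat m hm, ← zpow_neg, neg_neg]
  set δ : NNReal := (p : NNReal) ^ (-(N : ℤ)) with hδ
  have hδ1 : δ ≤ 1 := zpow_le_one_of_nonpos₀ hp1 (by omega)
  have hkey : ∀ s : ℕ, 1 ≤ s → (p : NNReal) ^ (padicValNat p s : ℤ) * δ ^ s ≤ δ := by
    intro s hs
    have hv : padicValNat p s ≤ s - 1 := NewtonAux.padicValNat_le_pred hs
    have hδs : δ ^ s = (p : NNReal) ^ ((-(N : ℤ)) * s) := by
      rw [hδ, ← zpow_natCast ((p : NNReal) ^ (-(N : ℤ))) s, ← zpow_mul]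
    rw [hδs]
    refine NewtonAux.zpow_mul_zpow_le hp1 ?_
    have h1 : (padicValNat p s : ℤ) ≤ (s : ℤ) - 1 := by
      have : (padicValNat p s : ℤ) ≤ ((s - 1 : ℕ) : ℤ) := by exact_mod_cast hv
      omega
    have h2 : (1 : ℤ) ≤ (N : ℤ) := by exact_mod_cast hN
    have h3 : (1 : ℤ) ≤ (s : ℤ) := by exact_mod_cast hs
    nlinarith
  suffices H : ∀ k, k ≤ n → ∀ j, ‖coeff (R := K) k (X' j - X j)‖₊ ≤ δ by
    intro i k hk
    have h1 := H k hk i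
    have h2 : coeff (R := K) k (X i - X' i) = -(coeff (R := K) k (X' i - X i)) := by
      rw [map_sub, map_sub]; ring
    rw [h2, nnnorm_neg]
    exact h1
  intro k
  induction k using Nat.strong_induction_on with
  | _ k IH =>
  intro hk j
  rcases Nat.eq_zero_or_pos k with rfl | hk1
  · rw [coeff_zero_eq_constantCoeff, map_sub, hX0', hX0, sub_self, nnnorm_zero]
    exact zero_le'
  -- now 1 ≤ k ≤ n
  set T : Fin g → Fin g → PowerSeries K := fun i j => ∑ r ∈ Finset.range (n + 1),
      C (R := K) (coeff (R := K) r (f i j) * ((r + 1 : ℕ) : K)⁻¹) * ((X' j) ^ (r + 1) - (X j) ^ (r + 1))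
      with hTdef
  -- Step A: the integrated equation
  have hid : ∀ i, (k : K) * ∑ j, coeff (R := K) k (T i j)
      = coeff (R := K) (k - 1) (G' i) - coeff (R := K) (k - 1) (G i) := by
    intro i
    have hcd : ∀ u : PowerSeries K, coeff (R := K) (k - 1) (psderiv u) = (k : K) * coeff (R := K) k u := by
      intro u
      rw [NewtonAux.coeff_psderiv]
      have e1 : k - 1 + 1 = k := by omega
      rw [e1]
    have hd1 : k - 1 < n := by omega
    calc (k : K) * ∑ j, coeff (R := K) k (T i j) = ∑ j, coeff (R := K) (k - 1) (psderiv (T i j)) := by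
          rw [Finset.mul_sum]
          exact Finset.sum_congr rfl fun j _ => (hcd _).symm
      _ = ∑ j, (coeff (R := K) (k - 1) (pscomp (f i j) (X' j) * psderiv (X' j))
               - coeff (R := K) (k - 1) (pscomp (f i j) (X j) * psderiv (X j))) := by
          refine Finset.sum_congr rfl fun j _ => ?_
          have hsplit : T i j
              = (∑ r ∈ Finset.range (n + 1),
                  C (R := K) (coeff (R := K) r (f i j) * ((r + 1 : ℕ) : K)⁻¹) * (X' j) ^ (r + 1))
              - (∑ r ∈ Finset.range (n + 1),
                  C (R := K) (coeff (R := K) r (f i j) * ((r + 1 : ℕ) : K)⁻¹) * (X j) ^ (r + 1)) := by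
            rw [hTdef, ← Finset.sum_sub_distrib]
            exact Finset.sum_congr rfl fun r _ => by rw [mul_sub]
          rw [hsplit, NewtonAux.psderiv_sub, map_sub,
              NewtonAux.coeff_psderiv_antideriv (hX0' j) hchar hd1,
              NewtonAux.coeff_psderiv_antideriv (hX0 j) hchar hd1]
      _ = coeff (R := K) (k - 1) (G' i) - coeff (R := K) (k - 1) (G i) := by
          rw [← hXsol, ← hXsol']
          simp [Matrix.mulVec, dotProduct, Hf, Finset.sum_sub_distrib]
  -- Step B: bound on the nonlinear part
  have hU : ∀ i j', ‖coeff (R := K) k (T i j' - C (R := K) (Hf0 f i j') * (X' j' - X j'))‖₊ ≤ δ := by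
    intro i j'
    have hdx0 : constantCoeff (R := K) (X' j' - X j') = 0 := by
      rw [map_sub, hX0', hX0, sub_self]
    have hdxIH : ∀ m < k, ‖coeff (R := K) m (X' j' - X j')‖₊ ≤ δ := fun m hm => IH m hm (by omega) j'
    have hbin : ∀ r : ℕ, (X j' + (X' j' - X j')) ^ (r + 1) - (X j') ^ (r + 1)
        = ∑ a ∈ Finset.range (r + 1),
            (X j') ^ a * (X' j' - X j') ^ (r + 1 - a) * ((r + 1).choose a : PowerSeries K) := by
      intro r
      rw [add_pow, Finset.sum_range_succ]
      simp
    have hH0 : Hf0 f i j' = coeff (R := K) 0 (f i j') := by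
      rw [Hf0, Matrix.of_apply, coeff_zero_eq_constantCoeff]
    have hx' : X' j' = X j' + (X' j' - X j') := by ring
    have hTexp : T i j' - C (R := K) (Hf0 f i j') * (X' j' - X j')
        = ∑ r ∈ Finset.range n,
            C (R := K) (coeff (R := K) (r + 1) (f i j') * ((r + 1 + 1 : ℕ) : K)⁻¹) *
              ∑ a ∈ Finset.range (r + 1 + 1),
                (X j') ^ a * (X' j' - X j') ^ (r + 1 + 1 - a) *
                  ((r + 1 + 1).choose a : PowerSeries K) := by
      have h1 : T i j' = ∑ r ∈ Finset.range (n + 1),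
          C (R := K) (coeff (R := K) r (f i j') * ((r + 1 : ℕ) : K)⁻¹) *
            ((X j' + (X' j' - X j')) ^ (r + 1) - (X j') ^ (r + 1)) := by
        rw [hTdef]
        exact Finset.sum_congr rfl fun r _ => by rw [← hx']
      rw [h1]
      simp only [hbin]
      rw [Finset.sum_range_succ']
      rw [hH0]
      simp [Finset.sum_range_one]
    rw [hTexp, map_sum]
    refine IsUltrametricDist.nnnorm_sum_le_of_forall_le fun r _ => ?_
    rw [coeff_C_mul, map_sum, Finset.mul_sum]
    refine IsUltrametricDist.nnnorm_sum_le_of_forall_le fun a ha => ?_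
    rw [Finset.mem_range] at ha
    set s : ℕ := r + 1 + 1 - a with hsdef
    have hs1 : 1 ≤ s := by omega
    have hcast2 : (((r + 1 + 1).choose a : ℕ) : PowerSeries K)
        = C (R := K) ((((r + 1 + 1).choose a : ℕ)) : K) := (map_natCast (C (R := K)) _).symm
    rw [hcast2, coeff_mul_C]
    -- nat identity
    have hnid : (r + 1 + 1).choose a * s = (r + 1 + 1) * (r + 1).choose (s - 1) := by
      have h1 : (r + 1 + 1).choose a = (r + 1 + 1).choose s :=
        (Nat.choose_symm (by omega : a ≤ r + 1 + 1)).symm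
      have h2 := Nat.add_one_mul_choose_eq (r + 1) (s - 1)
      have h3 : s - 1 + 1 = s := by omega
      simp only [Nat.succ_eq_add_one, h3] at h2
      rw [h1, ← h2]
    have hr2 : ((r + 1 + 1 : ℕ) : K) ≠ 0 := hchar _ (by omega)
    have hs0 : ((s : ℕ) : K) ≠ 0 := hchar _ (by omega)
    have hKid : ((r + 1 + 1 : ℕ) : K)⁻¹ * (((r + 1 + 1).choose a : ℕ) : K)
        = (((r + 1).choose (s - 1) : ℕ) : K) * ((s : ℕ) : K)⁻¹ := by
      have hc : (((r + 1 + 1).choose a : ℕ) : K) * ((s : ℕ) : K)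
          = ((r + 1 + 1 : ℕ) : K) * (((r + 1).choose (s - 1) : ℕ) : K) := by
        exact_mod_cast congrArg (Nat.cast : ℕ → K) hnid
      have hC : (((r + 1 + 1).choose a : ℕ) : K)
          = ((r + 1 + 1 : ℕ) : K) * (((r + 1).choose (s - 1) : ℕ) : K) * ((s : ℕ) : K)⁻¹ :=
        (eq_mul_inv_iff_mul_eq₀ hs0).2 hc
      rw [hC, ← mul_assoc, ← mul_assoc, inv_mul_cancel₀ hr2, one_mul]
    have hco : ‖coeff (R := K) k ((X j') ^ a * (X' j' - X j') ^ s)‖₊ ≤ δ ^ s :=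
      NewtonAux.coeff_pow_mul_pow_bound (hX0 j') hdx0 (hXint j') hk1 hdxIH hs1 (by omega)
    have hbb : ‖((r + 1 + 1 : ℕ) : K)⁻¹ * (((r + 1 + 1).choose a : ℕ) : K)‖₊
        ≤ (p : NNReal) ^ (padicValNat p s : ℤ) := by
      rw [hKid, nnnorm_mul, hinv s (by omega)]
      calc ‖(((r + 1).choose (s - 1) : ℕ) : K)‖₊ * (p : NNReal) ^ (padicValNat p s : ℤ)
          ≤ 1 * (p : NNReal) ^ (padicValNat p s : ℤ) := mul_le_mul' (hnorm_nat _) le_rfl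
        _ = (p : NNReal) ^ (padicValNat p s : ℤ) := one_mul _
    have heq : coeff (R := K) (r + 1) (f i j') * ((r + 1 + 1 : ℕ) : K)⁻¹ *
          (coeff (R := K) k ((X j') ^ a * (X' j' - X j') ^ s) * ((((r + 1 + 1).choose a : ℕ)) : K))
        = coeff (R := K) (r + 1) (f i j') *
            ((((r + 1 + 1 : ℕ) : K)⁻¹ * (((r + 1 + 1).choose a : ℕ) : K)) *
              coeff (R := K) k ((X j') ^ a * (X' j' - X j') ^ s)) := by
      ring
    rw [heq, nnnorm_mul, nnnorm_mul]
    calc ‖coeff (R := K) (r + 1) (f i j')‖₊ *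
          (‖((r + 1 + 1 : ℕ) : K)⁻¹ * (((r + 1 + 1).choose a : ℕ) : K)‖₊ *
            ‖coeff (R := K) k ((X j') ^ a * (X' j' - X j') ^ s)‖₊)
        ≤ 1 * ((p : NNReal) ^ (padicValNat p s : ℤ) * δ ^ s) :=
          mul_le_mul' (hf i j' (r + 1)) (mul_le_mul' hbb hco)
      _ = (p : NNReal) ^ (padicValNat p s : ℤ) * δ ^ s := one_mul _
      _ ≤ δ := hkey s hs1
  -- Step C: linear algebra assembly
  have hkne : (k : K) ≠ 0 := hchar k hk1
  set w : Fin g → K := fun i => (k : K)⁻¹ * (coeff (R := K) (k - 1) (G' i) - coeff (R := K) (k - 1) (G i))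
      - ∑ j', coeff (R := K) k (T i j' - C (R := K) (Hf0 f i j') * (X' j' - X j')) with hwdef
  have hksum : ∀ i, ∑ j', coeff (R := K) k (T i j')
      = (k : K)⁻¹ * (coeff (R := K) (k - 1) (G' i) - coeff (R := K) (k - 1) (G i)) := by
    intro i
    rw [← hid i, ← mul_assoc, inv_mul_cancel₀ hkne, one_mul]
  have hmv : ∀ i, ∑ j', Hf0 f i j' * coeff (R := K) k (X' j' - X j') = w i := by
    intro i
    have hsplit : ∑ j', coeff (R := K) k (T i j')
        = (∑ j', Hf0 f i j' * coeff (R := K) k (X' j' - X j'))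
          + ∑ j', coeff (R := K) k (T i j' - C (R := K) (Hf0 f i j') * (X' j' - X j')) := by
      rw [← Finset.sum_add_distrib]
      refine Finset.sum_congr rfl fun j' _ => ?_
      have e1 : coeff (R := K) k (T i j' - C (R := K) (Hf0 f i j') * (X' j' - X j'))
          = coeff (R := K) k (T i j') - Hf0 f i j' * coeff (R := K) k (X' j' - X j') := by
        rw [map_sub, coeff_C_mul]
      rw [e1]
      ring
    rw [hwdef]
    simp only []
    rw [← hksum i, hsplit]
    ring
  have hveq : B0.mulVec w = fun j' => coeff (R := K) k (X' j' - X j') := by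
    have h1 : (Hf0 f).mulVec (fun j' => coeff (R := K) k (X' j' - X j')) = w := funext fun i => hmv i
    rw [← h1, Matrix.mulVec_mulVec, hB0r, Matrix.one_mulVec]
  have hwb : ∀ i, ‖w i‖₊ ≤ δ := by
    intro i
    have hA : ‖(k : K)⁻¹ * (coeff (R := K) (k - 1) (G' i) - coeff (R := K) (k - 1) (G i))‖₊ ≤ δ := by
      rw [nnnorm_mul, hinv k hk1]
      have hGd : coeff (R := K) (k - 1) (G' i) - coeff (R := K) (k - 1) (G i)
          = -(coeff (R := K) (k - 1) (G i - G' i)) := by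
        rw [map_sub]; ring
      rw [hGd, nnnorm_neg]
      calc (p : NNReal) ^ (padicValNat p k : ℤ) * ‖coeff (R := K) (k - 1) (G i - G' i)‖₊
          ≤ (p : NNReal) ^ (padicValNat p k : ℤ)
              * (p : NNReal) ^ (-((N + Nat.log p n : ℕ)) : ℤ) :=
            mul_le_mul' le_rfl (hclose i (k - 1) (by omega))
        _ ≤ δ := by
            refine NewtonAux.zpow_mul_zpow_le hp1 ?_
            have h1 : padicValNat p k ≤ Nat.log p n :=
              le_trans (padicValNat_le_nat_log k) (Nat.log_mono_right hk)
            have h2 : ((padicValNat p k : ℕ) : ℤ) ≤ ((Nat.log p n : ℕ) : ℤ) := by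
              exact_mod_cast h1
            omega
    have hB : ‖∑ j', coeff (R := K) k (T i j' - C (R := K) (Hf0 f i j') * (X' j' - X j'))‖₊ ≤ δ :=
      IsUltrametricDist.nnnorm_sum_le_of_forall_le fun j' _ => hU i j'
    rw [hwdef]
    simp only []
    rw [sub_eq_add_neg]
    refine le_trans (IsUltrametricDist.nnnorm_add_le_max _ _) (max_le hA ?_)
    rw [nnnorm_neg]
    exact hB
  have hvj : coeff (R := K) k (X' j - X j) = ∑ i, B0 j i * w i := by
    rw [← congrFun hveq j]
    rfl
  rw [hvj]
  refine IsUltrametricDist.nnnorm_sum_le_of_forall_le fun i _ => ?_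
  rw [nnnorm_mul]
  calc ‖B0 j i‖₊ * ‖w i‖₊ ≤ 1 * δ := mul_le_mul' (hB0int j i) (hwb i)
    _ = δ := one_mul δ
end
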